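/- Let T be a minimum spanning tree of the complete weighted graph on finite set V with edge weights D(u,v), and define U(u,v) to be the maximum weight of an edge on the unique path in T from u to v. Then U is an ultrametric, U(u,v) ≤ D(u,v) for all pairs, and for any other symmetric function O satisfying the strong triangle inequality with O ≤ D pointwise, we have O(u,v) ≤ U(u,v) for all pairs. That is, U is the pointwise-maximal decrement-only ultrametric fit of D. -/

import Mathlib

open scoped Classical

private lemma foldr_max_nonneg (l : List ℝ) : 0 ≤ l.foldr max 0 := by
  induction l with
  | nil => simp
  | cons a l ih => exact le_max_of_le_right ih

private lemma le_foldr_max {l : List ℝ} {a : ℝ} (h : a ∈ l) : a ≤ l.foldr max 0 := by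
  induction l with
  | nil => simp at h
  | cons b l ih =>
    rcases List.mem_cons.1 h with rfl | h
    · exact le_max_left _ _
    · exact le_max_of_le_right (ih h)

private lemma foldr_max_le {l : List ℝ} {c : ℝ} (hc : 0 ≤ c) (h : ∀ a ∈ l, a ≤ c) :
    l.foldr max 0 ≤ c := by
  induction l with
  | nil => simpa
  | cons b l ih =>
    exact max_le (h b (List.mem_cons_self)) (ih fun a ha => h a (List.mem_cons_of_mem _ ha))

private lemma sum_edgeFinset_congr {V : Type*} (G : SimpleGraph V) (w : Sym2 V → ℝ)
    (i1 i2 : Fintype G.edgeSet) :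
    ∑ e ∈ @SimpleGraph.edgeFinset V G i1, w e = ∑ e ∈ @SimpleGraph.edgeFinset V G i2, w e := by
  have h : i1 = i2 := Subsingleton.elim i1 i2
  subst h
  rfl

/-- walks avoiding the edge `s(a,b)` give reachability in `H`. -/
private lemma reach_avoid {V : Type*} {G H : SimpleGraph V} {a b : V}
    (hsub : ∀ x y, G.Adj x y → s(x, y) ≠ s(a, b) → H.Adj x y) :
    ∀ {x y : V} (p : G.Walk x y), s(a, b) ∉ p.edges → H.Reachable x y := by
  intro x y p
  induction p with
  | nil => intro _; exact SimpleGraph.Reachable.refl _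
  | cons h q ih =>
    intro hne
    simp only [SimpleGraph.Walk.edges_cons, List.mem_cons, not_or] at hne
    exact ((hsub _ _ h (Ne.symm hne.1)).reachable).trans (ih hne.2)

private lemma reach_aux {V : Type*} {G H : SimpleGraph V} {a b : V}
    (hsub : ∀ x y, G.Adj x y → s(x, y) ≠ s(a, b) → H.Adj x y) :
    ∀ {x y : V} (p : G.Walk x y), p.IsPath → s(a, b) ∈ p.edges →
      (H.Reachable x a ∧ H.Reachable b y) ∨ (H.Reachable x b ∧ H.Reachable a y) := by
  intro x y p
  induction p with
  | nil => intro _ hmem; simp at hmem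
  | @cons x z y h q ih =>
    intro hp hmem
    have hq : q.IsPath := hp.of_cons
    have hnodup := hp.edges_nodup
    rw [SimpleGraph.Walk.edges_cons] at hnodup hmem
    rcases List.mem_cons.1 hmem with heq | hmem'
    · -- s(x,z) = s(a,b)
      have hnot : s(a, b) ∉ q.edges := heq ▸ (List.nodup_cons.1 hnodup).1
      have hqr : H.Reachable z y := reach_avoid hsub q hnot
      rcases Sym2.eq_iff.1 heq.symm with ⟨rfl, rfl⟩ | ⟨rfl, rfl⟩
      · exact Or.inl ⟨SimpleGraph.Reachable.refl _, hqr⟩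
      · exact Or.inr ⟨SimpleGraph.Reachable.refl _, hqr⟩
    · have hne : s(x, z) ≠ s(a, b) := by
        intro hcontra
        exact (List.nodup_cons.1 hnodup).1 (hcontra ▸ hmem')
      have hxz : H.Reachable x z := (hsub _ _ h hne).reachable
      rcases ih hq hmem' with ⟨h1, h2⟩ | ⟨h1, h2⟩
      · exact Or.inl ⟨hxz.trans h1, h2⟩
      · exact Or.inr ⟨hxz.trans h1, h2⟩

private lemma reach_all {V : Type*} {G H : SimpleGraph V} {a b : V}
    (hsub : ∀ x y, G.Adj x y → s(x, y) ≠ s(a, b) → H.Adj x y)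
    (hab : H.Reachable a b) :
    ∀ {x y : V} (p : G.Walk x y), H.Reachable x y := by
  intro x y p
  induction p with
  | nil => exact SimpleGraph.Reachable.refl _
  | @cons x z y h q ih =>
    refine SimpleGraph.Reachable.trans ?_ ih
    by_cases heq : s(x, z) = s(a, b)
    · rcases Sym2.eq_iff.1 heq with ⟨rfl, rfl⟩ | ⟨rfl, rfl⟩
      · exact hab
      · exact hab.symm
    · exact (hsub _ _ h heq).reachable

theorem stmt2 {V : Type*} [Fintype V] [DecidableEq V]
    (D : V → V → ℝ) (hsymm : ∀ u v, D u v = D v u)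
    (hpos : ∀ u v, u ≠ v → 0 < D u v)
    (hcard : 2 ≤ Fintype.card V)
    (T : SimpleGraph V) (hconn : T.Connected) (hacyc : T.IsAcyclic)
    (hMST : ∀ T' : SimpleGraph V, T'.Connected → T'.IsAcyclic →
      ∑ e ∈ T.edgeFinset, Sym2.lift ⟨D, hsymm⟩ e ≤ ∑ e ∈ T'.edgeFinset, Sym2.lift ⟨D, hsymm⟩ e)
    (U : V → V → ℝ)
    (hU : ∀ (u v : V) (p : T.Walk u v), p.IsPath →
      U u v = (p.edges.map (Sym2.lift ⟨D, hsymm⟩)).foldr max 0) :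
    (∀ u v w, U u v ≤ max (U u w) (U w v)) ∧
      (∀ u v, u ≠ v → U u v ≤ D u v) ∧
      (∀ O : V → V → ℝ, (∀ u v, O u v = O v u) →
        (∀ u v w, O u v ≤ max (O u w) (O w v)) →
        (∀ u v, u ≠ v → O u v ≤ D u v) →
        ∀ u v, u ≠ v → O u v ≤ U u v) := by
  set w : Sym2 V → ℝ := Sym2.lift ⟨D, hsymm⟩ with hw
  have hwval : ∀ a b : V, w s(a, b) = D a b := fun a b => rfl
  -- part 1 : ultrametric inequality
  have part1 : ∀ u v x, U u v ≤ max (U u x) (U x v) := by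
    intro u v x
    obtain ⟨p0⟩ := hconn u x
    obtain ⟨q0⟩ := hconn x v
    set p := p0.bypass
    set q := q0.bypass
    have hUp := hU u x p p0.bypass_isPath
    have hUq := hU x v q q0.bypass_isPath
    set r := (p.append q).bypass
    have hUr := hU u v r (p.append q).bypass_isPath
    rw [hUr, hUp, hUq]
    refine foldr_max_le (le_max_of_le_left (foldr_max_nonneg _)) ?_
    intro c hc
    obtain ⟨ed, hed, rfl⟩ := List.mem_map.1 hc
    have := (p.append q).edges_bypass_subset hed
    rw [SimpleGraph.Walk.edges_append, List.mem_append] at this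
    rcases this with h' | h'
    · exact le_max_of_le_left (le_foldr_max (List.mem_map_of_mem h'))
    · exact le_max_of_le_right (le_foldr_max (List.mem_map_of_mem h'))
  -- part 2 : U ≤ D, via the MST exchange argument
  have part2 : ∀ u v, u ≠ v → U u v ≤ D u v := by
    intro u v huv
    obtain ⟨p0⟩ := hconn u v
    set p := p0.bypass with hpdef
    have hpp : p.IsPath := p0.bypass_isPath
    rw [hU u v p hpp]
    refine foldr_max_le (le_of_lt (hpos u v huv)) ?_
    intro c hc
    obtain ⟨ed, hed, rfl⟩ := List.mem_map.1 hc
    by_contra hlt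
    push_neg at hlt
    revert hed hlt
    induction ed using Sym2.ind with
    | _ a b =>
      intro hed hlt
      rw [hwval] at hlt
      have hab : T.Adj a b := T.mem_edgeSet.1 (p.edges_subset_edgeSet hed)
      -- u and v are not adjacent in T
      have hTuv : ¬ T.Adj u v := by
        intro hadj
        have hpeq : p = (SimpleGraph.Path.singleton hadj : T.Walk u v) := by
          have := hacyc.path_unique ⟨p, hpp⟩ (SimpleGraph.Path.singleton hadj)
          exact congrArg Subtype.val this
        rw [hpeq] at hed
        simp only [SimpleGraph.Path.singleton, SimpleGraph.Walk.edges_cons,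
          SimpleGraph.Walk.edges_nil, List.mem_singleton] at hed
        have hDab : D a b = D u v := by rw [← hwval, ← hwval, hed]
        linarith
      have hfe : s(u, v) ≠ s(a, b) := by
        intro hcontra
        exact hTuv (T.mem_edgeSet.1 (hcontra ▸ (p.edges_subset_edgeSet hed)))
      have hfnotT : s(u, v) ∉ T.edgeSet := fun hmem => hTuv (T.mem_edgeSet.1 hmem)
      -- the swapped graph
      set T' : SimpleGraph V :=
        T.deleteEdges {s(a, b)} ⊔ SimpleGraph.fromEdgeSet {s(u, v)} with hT'def
      have hAdj' : ∀ x y, T'.Adj x y ↔ (T.Adj x y ∧ s(x, y) ≠ s(a, b)) ∨ s(x, y) = s(u, v) := by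
        intro x y
        constructor
        · intro h
          rcases h with h | h
          · rw [SimpleGraph.deleteEdges_adj] at h
            exact Or.inl ⟨h.1, by simpa using h.2⟩
          · rw [SimpleGraph.fromEdgeSet_adj] at h
            exact Or.inr (by simpa using h.1)
        · intro h
          rcases h with ⟨h1, h2⟩ | h
          · exact Or.inl (by rw [SimpleGraph.deleteEdges_adj]; exact ⟨h1, by simpa using h2⟩)
          · refine Or.inr ?_
            rw [SimpleGraph.fromEdgeSet_adj]
            refine ⟨by simpa using h, ?_⟩
            rcases Sym2.eq_iff.1 h with ⟨rfl, rfl⟩ | ⟨rfl, rfl⟩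
            · exact huv
            · exact huv.symm
      have hsub : ∀ x y, T.Adj x y → s(x, y) ≠ s(a, b) → T'.Adj x y := by
        intro x y h1 h2
        exact (hAdj' x y).2 (Or.inl ⟨h1, h2⟩)
      have huvAdj' : T'.Adj u v := (hAdj' u v).2 (Or.inr rfl)
      -- a and b are reachable in T'
      have hreachab : T'.Reachable a b := by
        rcases reach_aux hsub p hpp hed with ⟨h1, h2⟩ | ⟨h1, h2⟩
        · exact h1.symm.trans (huvAdj'.reachable.trans h2.symm)
        · exact h2.trans (huvAdj'.symm.reachable.trans h1)
      -- T' is connected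
      have hconn' : T'.Connected := by
        have hne : Nonempty V := hconn.nonempty
        refine SimpleGraph.Connected.mk ?_
        intro x y
        obtain ⟨wk⟩ := hconn x y
        exact reach_all hsub hreachab wk
      -- T' is acyclic
      have hacyc' : T'.IsAcyclic := by
        intro x c hc
        by_cases hfc : s(u, v) ∈ c.edges
        · -- the new edge lies on a cycle, so it is not a bridge of T'
          have hnb : ¬ T'.IsBridge s(u, v) := by
            rw [SimpleGraph.isBridge_iff_mem_and_forall_cycle_notMem]
            push_neg
            exact ⟨x, c, hc, hfc⟩
            exact huvAdj'
          rw [SimpleGraph.isBridge_iff] at hnb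
          push_neg at hnb
          have hreach0 : (T' \ SimpleGraph.fromEdgeSet {s(u, v)}).Reachable u v := hnb
          -- this gives a u-v path in T avoiding s(a,b), contradicting uniqueness of p
          set G0 := T' \ SimpleGraph.fromEdgeSet {s(u, v)} with hG0
          obtain ⟨wk⟩ := hreach0
          have hwkT : ∀ ed ∈ wk.edges, ed ∈ T.edgeSet := by
            intro ed hedmem
            have h1 := wk.edges_subset_edgeSet hedmem
            revert h1
            induction ed using Sym2.ind with
            | _ s t =>
              intro h1
              have h2 := (SimpleGraph.mem_edgeSet _).1 h1
              rw [hG0, SimpleGraph.sdiff_adj, SimpleGraph.fromEdgeSet_adj] at h2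
              rcases (hAdj' s t).1 h2.1 with ⟨h3, _⟩ | h3
              · exact h3
              · exact absurd ⟨h3, h2.1.ne⟩ h2.2
          have hwkE : ∀ ed ∈ wk.edges, ed ≠ s(a, b) := by
            intro ed hedmem
            have h1 := wk.edges_subset_edgeSet hedmem
            revert h1
            induction ed using Sym2.ind with
            | _ s t =>
              intro h1 hcontra
              have h2 := (SimpleGraph.mem_edgeSet _).1 h1
              rw [hG0, SimpleGraph.sdiff_adj, SimpleGraph.fromEdgeSet_adj] at h2
              rcases (hAdj' s t).1 h2.1 with ⟨_, h3⟩ | h3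
              · exact h3 hcontra
              · exact h2.2 ⟨h3, h2.1.ne⟩
          set q0 : T.Walk u v := wk.transfer T hwkT with hq0
          have hq0edges : q0.edges = wk.edges := wk.edges_transfer hwkT
          have hupath : p = q0.bypass :=
            congrArg Subtype.val (hacyc.path_unique ⟨p, hpp⟩ ⟨q0.bypass, q0.bypass_isPath⟩)
          have hmem' : s(a, b) ∈ wk.edges := by
            have h1 : s(a, b) ∈ q0.bypass.edges := hupath ▸ hed
            have h2 : s(a, b) ∈ q0.edges := q0.edges_bypass_subset h1
            rwa [hq0edges] at h2
          exact hwkE _ hmem' rfl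
        · -- the cycle avoids the new edge, so it lives in T
          have hcT : ∀ ed ∈ c.edges, ed ∈ T.edgeSet := by
            intro ed hedmem
            have h1 := c.edges_subset_edgeSet hedmem
            revert h1
            induction ed using Sym2.ind with
            | _ s t =>
              intro h1
              rcases (hAdj' s t).1 ((SimpleGraph.mem_edgeSet _).1 h1) with ⟨h2, _⟩ | h2
              · exact h2
              · exact absurd (h2 ▸ hedmem) hfc
          exact hacyc (c.transfer T hcT) (hc.transfer hcT)
      -- compute the edge sums
      have heT : s(a, b) ∈ T.edgeFinset := SimpleGraph.mem_edgeFinset.2 (p.edges_subset_edgeSet hed)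
      have hfin : T'.edgeFinset = insert s(u, v) (T.edgeFinset.erase s(a, b)) := by
        ext ed
        simp only [Finset.mem_insert, Finset.mem_erase, SimpleGraph.mem_edgeFinset]
        induction ed using Sym2.ind with
        | _ s t =>
          rw [SimpleGraph.mem_edgeSet, SimpleGraph.mem_edgeSet, hAdj']
          constructor
          · rintro (⟨h1, h2⟩ | h1)
            · exact Or.inr ⟨h2, h1⟩
            · exact Or.inl h1
          · rintro (h1 | ⟨h1, h2⟩)
            · exact Or.inr h1
            · exact Or.inl ⟨h2, h1⟩
      have hfnot : s(u, v) ∉ T.edgeFinset.erase s(a, b) := by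
        intro hmem
        exact hfnotT (SimpleGraph.mem_edgeFinset.1 (Finset.mem_of_mem_erase hmem))
      have hsum : ∑ e ∈ T'.edgeFinset, w e
          = w s(u, v) + (∑ e ∈ T.edgeFinset, w e - w s(a, b)) := by
        rw [hfin, Finset.sum_insert hfnot, Finset.sum_erase_eq_sub heT]
      have hle := (hMST T' hconn' hacyc').trans_eq ((sum_edgeFinset_congr T' w _ _).trans hsum)
      rw [hwval, hwval] at hle
      linarith
  refine ⟨part1, part2, ?_⟩
  -- part 3 : maximality
  intro O hOs hOtri hOle u v huv
  obtain ⟨p0⟩ := hconn u v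
  rw [hU u v p0.bypass p0.bypass_isPath]
  have claim : ∀ (x y : V) (q : T.Walk x y), x ≠ y →
      O x y ≤ (q.edges.map w).foldr max 0 := by
    intro x y q
    induction q with
    | nil => intro h; exact absurd rfl h
    | @cons x z y h q ih =>
      intro hxy
      rw [SimpleGraph.Walk.edges_cons, List.map_cons, List.foldr_cons]
      by_cases hzy : z = y
      · subst hzy
        calc O x z ≤ D x z := hOle x z h.ne
        _ = w s(x, z) := (hwval x z).symm
        _ ≤ _ := le_max_left _ _
      · calc O x y ≤ max (O x z) (O z y) := hOtri x y z
        _ ≤ max (w s(x, z)) ((q.edges.map w).foldr max 0) := by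
            refine max_le_max ?_ (ih hzy)
            rw [hwval]
            exact hOle x z h.ne
  exact claim u v p0.bypass huv
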